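/- Let T be a bijective filling of the diagram of λ ⊢ n by 1,…,n. (i) For each a and each η ∈ S_{t_a}, the permutation η_T lies in R(T), and the assignments η ↦ η_T combine to an injective group homomorphism Π_a S_{t_a} → R(T). (ii) The image of this homomorphism normalizes C(T) and intersects it trivially, so the subgroup C̃(T) of S_n generated by C(T) and this image is an internal semidirect product of C(T) with Π_a S_{t_a}. (iii) The map sgn~ : C̃(T) → {±1} defined by sgn~(η_T·σ) = sgn(σ) (for η_T in the image and σ ∈ C(T)) is a well-defined group homomorphism. -/

import Mathlib

open MvPolynomial

noncomputable section

namespace HigherSpecht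

open scoped Classical

/-- A tableau: a filling of the plane (row, column), `0`-indexed, with `0` outside the diagram. -/
abbrev Tab := ℕ × ℕ → ℕ

/-- A permutation of `ℕ` represents an element of `Sₙ` (acting on `{1, …, n}`)
when it fixes `0` and everything above `n`. -/
def SuppIn (n : ℕ) (w : Equiv.Perm ℕ) : Prop := ∀ i, i = 0 ∨ n < i → w i = i

/-- Descending locations of a permutation (one-line notation `w 1, …, w n`). -/
def DslSet (n : ℕ) (w : Equiv.Perm ℕ) : Finset ℕ :=
  (Finset.Ioo 0 n).filter fun i => w (i + 1) < w i

/-- Ascending locations of a permutation. -/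
def AslSet (n : ℕ) (w : Equiv.Perm ℕ) : Finset ℕ :=
  (Finset.Ioo 0 n).filter fun i => w i < w (i + 1)

/-- The row in which the entry `i` shows up in a tableau. -/
def rowIdx (T : Tab) (i : ℕ) : ℕ := sInf {r | ∃ c, T (r, c) = i}

/-- The column in which the entry `i` shows up in a tableau. -/
def colIdx (T : Tab) (i : ℕ) : ℕ := sInf {c | T (rowIdx T i, c) = i}

/-- The box containing the entry `i`. -/
def posOf (T : Tab) (i : ℕ) : ℕ × ℕ := (rowIdx T i, colIdx T i)

/-- Descending indices of a (standard) tableau: `i` with the row of `i+1` strictly below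
the row of `i`. -/
def DsiSet (n : ℕ) (T : Tab) : Finset ℕ :=
  (Finset.Ioo 0 n).filter fun i => rowIdx T i < rowIdx T (i + 1)

/-- `Dsi^c`, the complemented descent set `{n - i | i ∈ Dsi}`. -/
def Dsic (n : ℕ) (T : Tab) : Finset ℕ := (DsiSet n T).image fun i => n - i

/-- The entry of `ct_J(S)` at a box `c`: the number of elements of `J` smaller than the
entry of `S` at `c`. -/
def ctEntry (T : Tab) (J : Finset ℕ) (c : ℕ × ℕ) : ℕ := (J.filter fun j => j < T c).card

/-- The cocharge tableau `ct(S)` of a standard tableau. -/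
def ctTab (n : ℕ) (T : Tab) : Tab := fun c => ctEntry T (DsiSet n T) c

/-- The (total) cocharge `cc(S)`: the sum of the entries of `ct(S)`. -/
def ccStat (n : ℕ) (T : Tab) : ℕ :=
  ∑ i ∈ Finset.Icc 1 n, ctEntry T (DsiSet n T) (posOf T i)

/-- `T` is a bijective filling of the given set of cells by `1, …, n` (`n` the number of
cells), with `0` outside. -/
def IsFillingF (cells : Finset (ℕ × ℕ)) (T : Tab) : Prop :=
  (∀ c, c ∉ cells → T c = 0) ∧ Set.BijOn T ↑cells (Set.Icc 1 cells.card)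

/-- A bijective filling of a Young diagram. -/
def IsFilling (μ : YoungDiagram) (T : Tab) : Prop := IsFillingF μ.cells T

/-- A standard Young tableau of shape `μ`: entries strictly increase along rows and columns. -/
def IsStandard (μ : YoungDiagram) (T : Tab) : Prop :=
  IsFilling μ T ∧ ∀ c₁ ∈ μ.cells, ∀ c₂ ∈ μ.cells,
    c₁ ≠ c₂ → c₁.1 ≤ c₂.1 → c₁.2 ≤ c₂.2 → T c₁ < T c₂

/-! ### Robinson–Schensted -/

/-- Row insertion: insert `x` into a row, returning the new row and the bumped entry. -/
def rowInsert : ℕ → List ℕ → List ℕ × Option ℕ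
  | x, [] => ([x], none)
  | x, y :: ys =>
    if x < y then (x :: ys, some y)
    else
      let p := rowInsert x ys
      (y :: p.1, p.2)

/-- Insertion of an entry into a tableau, given as a list of rows. -/
def tabInsert : List (List ℕ) → ℕ → List (List ℕ)
  | [], x => [[x]]
  | r :: rs, x =>
    match rowInsert x r with
    | (r', none) => r' :: rs
    | (r', some y) => r' :: tabInsert rs y

/-- One-line notation of `w ∈ Sₙ`. -/
def oneLine (n : ℕ) (w : Equiv.Perm ℕ) : List ℕ := (List.range n).map fun i => w (i + 1)

/-- The insertion tableau of the first `m` letters of `w`, as a list of rows. -/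
def PtabListPart (n : ℕ) (w : Equiv.Perm ℕ) (m : ℕ) : List (List ℕ) :=
  ((oneLine n w).take m).foldl tabInsert []

/-- Entry of a list-of-rows tableau at a (0-indexed) cell. -/
def listEntry (t : List (List ℕ)) (c : ℕ × ℕ) : ℕ := (t.getD c.1 []).getD c.2 0

/-- The Robinson–Schensted insertion tableau `P(w)`. -/
def Ptab (n : ℕ) (w : Equiv.Perm ℕ) : Tab := fun c => listEntry (PtabListPart n w n) c

/-- The Robinson–Schensted recording tableau `Q(w)`: the entry of a cell is the step at
which the cell is added to the shape. -/
def Qtab (n : ℕ) (w : Equiv.Perm ℕ) : Tab := fun c =>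
  sInf {m | listEntry (PtabListPart n w m) c ≠ 0}

/-! ### Schützenberger evacuation -/

/-- One step of a jeu de taquin slide into the hole at `c`. -/
def slideOnce (T : Tab) (c : ℕ × ℕ) : Tab × (ℕ × ℕ) :=
  let rc : ℕ × ℕ := (c.1, c.2 + 1)
  let dc : ℕ × ℕ := (c.1 + 1, c.2)
  if T rc = 0 ∧ T dc = 0 then (T, c)
  else if T dc = 0 ∨ (T rc ≠ 0 ∧ T rc < T dc) then
    (Function.update (Function.update T c (T rc)) rc 0, rc)
  else
    (Function.update (Function.update T c (T dc)) dc 0, dc)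

/-- Jeu de taquin slide (with fuel). -/
def slide : ℕ → Tab → ℕ × ℕ → Tab × (ℕ × ℕ)
  | 0, T, c => (T, c)
  | k + 1, T, c =>
    let p := slideOnce T c
    if p.2 = c then (T, c) else slide k p.1 p.2

/-- The Schützenberger evacuation: repeatedly delete the minimal entry, slide into the hole,
decrement the remaining entries, and record the vacated cell. -/
def evacAux : ℕ → Tab → Tab
  | 0, _ => fun _ => 0
  | m + 1, T =>
    let c0 := posOf T 1
    let p := slide (m + 1) (Function.update T c0 0) c0
    Function.update (evacAux m fun c => p.1 c - 1) p.2 (m + 1)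

/-- The evacuation tableau `ev S` of a standard tableau with `n` boxes. -/
def evac (n : ℕ) (T : Tab) : Tab := evacAux n T

/-- `Q̃(w) := ev (Q w)`. -/
def Qt (n : ℕ) (w : Equiv.Perm ℕ) : Tab := evac n (Qtab n w)

/-! ### Row and column groups, higher Specht polynomials -/

/-- The identification of `Fin n` with `{1, …, n} ⊆ ℕ`. -/
def finShift (n : ℕ) : Fin n ≃ {i : ℕ // 1 ≤ i ∧ i ≤ n} where
  toFun j := ⟨(j : ℕ) + 1, by have := j.isLt; omega⟩
  invFun i := ⟨(i : ℕ) - 1, by have := i.2; omega⟩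
  left_inv j := by apply Fin.ext; simp
  right_inv i := by apply Subtype.ext; have := i.2; simp; omega

/-- Embedding of the permutations of `Fin n` into permutations of `ℕ` (acting on `{1, …, n}`). -/
def embedPerm (n : ℕ) (σ : Equiv.Perm (Fin n)) : Equiv.Perm ℕ :=
  σ.extendDomain (finShift n)

/-- The row group `R(T)` of a filling, as a finset of permutations of `Fin n`. -/
def rowFinset (n : ℕ) (T : Tab) : Finset (Equiv.Perm (Fin n)) :=
  Finset.univ.filter fun τ => ∀ i ∈ Finset.Icc 1 n, rowIdx T (embedPerm n τ i) = rowIdx T i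

/-- The column group `C(T)` of a filling, as a finset of permutations of `Fin n`. -/
def colFinset (n : ℕ) (T : Tab) : Finset (Equiv.Perm (Fin n)) :=
  Finset.univ.filter fun σ => ∀ i ∈ Finset.Icc 1 n, colIdx T (embedPerm n σ i) = colIdx T i

/-- The row group `R(T)` as a set of permutations of `ℕ`. -/
def rowGroupSet (n : ℕ) (T : Tab) : Set (Equiv.Perm ℕ) :=
  {w | SuppIn n w ∧ ∀ i ∈ Finset.Icc 1 n, rowIdx T (w i) = rowIdx T i}

/-- The column group `C(T)` as a set of permutations of `ℕ`. -/
def colGroupSet (n : ℕ) (T : Tab) : Set (Equiv.Perm ℕ) :=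
  {w | SuppIn n w ∧ ∀ i ∈ Finset.Icc 1 n, colIdx T (w i) = colIdx T i}

/-- The Young symmetrizer `ε_T = Σ_{σ ∈ C(T)} Σ_{τ ∈ R(T)} sgn(σ) σ τ` acting on polynomials
(permutations acting by permuting the variables). -/
def epsAct (n : ℕ) (T : Tab) (p : MvPolynomial ℕ ℚ) : MvPolynomial ℕ ℚ :=
  ∑ σ ∈ colFinset n T, ∑ τ ∈ rowFinset n T,
    (Equiv.Perm.sign σ : ℤ) • rename (⇑(embedPerm n σ * embedPerm n τ)) p

/-- The monomial `p_T^S = Π_i x_i^{h_i}`, where `h_i` is the entry of `ct S` in the box of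
`T` containing `i`. -/
def pTS (n : ℕ) (T S : Tab) : MvPolynomial ℕ ℚ :=
  ∏ i ∈ Finset.Icc 1 n, X i ^ ctEntry S (DsiSet n S) (posOf T i)

/-- `s_T^S`: the order of the stabilizer of `p_T^S` in `R(T)`. -/
def sTS (n : ℕ) (T S : Tab) : ℕ :=
  ((rowFinset n T).filter fun τ =>
    rename (⇑(embedPerm n τ)) (pTS n T S) = pTS n T S).card

/-- The higher Specht polynomial `F_T^S := ε_T p_T^S / s_T^S`. -/
def FTS (n : ℕ) (T S : Tab) : MvPolynomial ℕ ℚ :=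
  ((sTS n T S : ℚ)⁻¹) • epsAct n T (pTS n T S)

/-- The higher Specht polynomial `F_w := F_{P(w)}^{Q̃(w)}` of a permutation. -/
def Fw (n : ℕ) (w : Equiv.Perm ℕ) : MvPolynomial ℕ ℚ := FTS n (Ptab n w) (Qt n w)

/-- The elementary symmetric polynomial `e_r` in the variables `x_1, …, x_n`. -/
def esym (n r : ℕ) : MvPolynomial ℕ ℚ :=
  ∑ s ∈ (Finset.Icc 1 n).powersetCard r, ∏ i ∈ s, X i

/-- The representation `V^S`: the span of the higher Specht polynomials `F_T^S` over all
bijective fillings `T` of the given cells. -/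
def VS (n : ℕ) (cells : Finset (ℕ × ℕ)) (S : Tab) : Submodule ℚ (MvPolynomial ℕ ℚ) :=
  Submodule.span ℚ {p | ∃ T : Tab, IsFillingF cells T ∧ p = FTS n T S}

/-- Multiplication of a subspace of polynomials by a fixed polynomial. -/
def polyMul (q : MvPolynomial ℕ ℚ) (V : Submodule ℚ (MvPolynomial ℕ ℚ)) :
    Submodule ℚ (MvPolynomial ℕ ℚ) :=
  Submodule.map (LinearMap.mulLeft ℚ q) V

/-- The symmetric multiplier `Π_r e_r^{h_r}`. -/
def eProd (n : ℕ) (h : ℕ → ℕ) : MvPolynomial ℕ ℚ := ∏ r ∈ Finset.Icc 1 n, esym n r ^ h r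

/-- `V^S_h := (Π_r e_r^{h_r}) V^S`. -/
def VSh (n : ℕ) (cells : Finset (ℕ × ℕ)) (S : Tab) (h : ℕ → ℕ) :
    Submodule ℚ (MvPolynomial ℕ ℚ) :=
  polyMul (eProd n h) (VS n cells S)

/-! ### The representations `R_{n,I}` -/

/-- For `i ∈ I`, `r_i := #{j ∈ {1,…,n-1} \ I : j < i}`. -/
def rIdxI (n : ℕ) (I : Finset ℕ) (i : ℕ) : ℕ :=
  ((Finset.Ioo 0 n \ I).filter fun j => j < i).card

/-- The vector `h^S_I`, whose `r`-th entry (for `r ≥ 1`) is `#{i ∈ I \ Dsi^c(S) : r_i = r}`. -/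
def hSI (n : ℕ) (I : Finset ℕ) (S : Tab) : ℕ → ℕ := fun r =>
  if 1 ≤ r then ((I \ Dsic n S).filter fun i => rIdxI n I i = r).card else 0

/-- The indicator vector `h(I,S)` of the set `I \ Dsi^c(S)`. -/
def hInd (n : ℕ) (I : Finset ℕ) (S : Tab) : ℕ → ℕ := fun r =>
  if r ∈ I \ Dsic n S then 1 else 0

/-- `F_{w,I} := F_w · Π_{i ∈ I \ Dsl(w)} e_{r_i}`. -/
def FwI (n : ℕ) (I : Finset ℕ) (w : Equiv.Perm ℕ) : MvPolynomial ℕ ℚ :=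
  Fw n w * ∏ i ∈ I \ DslSet n w, esym n (rIdxI n I i)

/-- The homogeneous version `F^hom_{w,I} := F_w · Π_{i ∈ I \ Dsl(w)} e_i`. -/
def FwIhom (n : ℕ) (I : Finset ℕ) (w : Equiv.Perm ℕ) : MvPolynomial ℕ ℚ :=
  Fw n w * ∏ i ∈ I \ DslSet n w, esym n i

/-- The representation `R_{n,I}`: span of the `F_{w,I}` over `w` with `Dsl(w) ⊆ I`. -/
def RnI (n : ℕ) (I : Finset ℕ) : Submodule ℚ (MvPolynomial ℕ ℚ) :=
  Submodule.span ℚ {p | ∃ w : Equiv.Perm ℕ, SuppIn n w ∧ DslSet n w ⊆ I ∧ p = FwI n I w}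

/-- The homogeneous representation `R^hom_{n,I}`. -/
def RnIhom (n : ℕ) (I : Finset ℕ) : Submodule ℚ (MvPolynomial ℕ ℚ) :=
  Submodule.span ℚ {p | ∃ w : Equiv.Perm ℕ, SuppIn n w ∧ DslSet n w ⊆ I ∧ p = FwIhom n I w}

/-- The index type for the decomposition of `R_{n,I}`: pairs of a partition `λ ⊢ n` and a
standard Young tableau `S` of shape `λ` with `Dsi^c(S) ⊆ I`. -/
def SIdx (n : ℕ) (I : Finset ℕ) : Type :=
  {q : YoungDiagram × Tab // q.1.cells.card = n ∧ IsStandard q.1 q.2 ∧ Dsic n q.2 ⊆ I}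

/-! ### Ordered set partitions -/

/-- The cumulative values `j_h` attached to a subset `I ⊆ {1,…,n-1}` (`j_0 = 0`,
`j_h` the `h`-th smallest element, `j_{|I|+1} = n`). -/
def jval (n : ℕ) (I : Finset ℕ) (h : ℕ) : ℕ :=
  if h = 0 then 0 else if h ≤ I.card then (I.sort (· ≤ ·)).getD (h - 1) 0 else n

/-- The composition `comp_n I`, as a function of the index `0 ≤ h ≤ |I|`. -/
def compFun (n : ℕ) (I : Finset ℕ) (h : ℕ) : ℕ := jval n I (h + 1) - jval n I h

/-- The set `OP_{n,I}` of ordered set partitions of `{1,…,n}` into `|I| + 1` blocks whose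
sizes are given by `comp_n I` (blocks indexed by `ℕ`, empty from index `|I| + 1` on). -/
def OPset (n : ℕ) (I : Finset ℕ) : Set (ℕ → Finset ℕ) :=
  {B | (∀ h, I.card + 1 ≤ h → B h = ∅) ∧
       (∀ h₁ h₂, h₁ ≠ h₂ → Disjoint (B h₁) (B h₂)) ∧
       (∀ h ≤ I.card, (B h).card = compFun n I h) ∧
       Finset.Icc 1 n = (Finset.range (I.card + 1)).biUnion B}

/-- The natural action of a permutation on an ordered set partition. -/
def permOP (w : Equiv.Perm ℕ) (B : ℕ → Finset ℕ) : ℕ → Finset ℕ := fun h => (B h).image w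

/-! ### The quotient `R_{n,k}` -/

/-- Elementary symmetric polynomials in `Fin n` variables. -/
def esymFin (n r : ℕ) : MvPolynomial (Fin n) ℚ :=
  ∑ s ∈ (Finset.univ : Finset (Fin n)).powersetCard r, ∏ i ∈ s, X i

/-- The ideal defining `R_{n,k}`: generated by `x_i^k` and `e_r`, `n-k+1 ≤ r ≤ n`. -/
def Jnk (n k : ℕ) : Ideal (MvPolynomial (Fin n) ℚ) :=
  Ideal.span ((Set.range fun i : Fin n => (X i : MvPolynomial (Fin n) ℚ) ^ k) ∪
    {p | ∃ r, n - k + 1 ≤ r ∧ r ≤ n ∧ p = esymFin n r})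

/-- The map sending `x_i` (for `1 ≤ i ≤ n`) to the corresponding variable of
`ℚ[x_1, …, x_n]`, and all other variables to `0`. -/
def toFin (n : ℕ) : MvPolynomial ℕ ℚ →ₐ[ℚ] MvPolynomial (Fin n) ℚ :=
  aeval fun i => if h : 1 ≤ i ∧ i ≤ n then X (⟨i - 1, by omega⟩ : Fin n) else 0

/-- The quotient projection onto `R_{n,k}`. -/
def projNK (n k : ℕ) : MvPolynomial ℕ ℚ →ₐ[ℚ] (MvPolynomial (Fin n) ℚ ⧸ Jnk n k) :=
  (Ideal.Quotient.mkₐ ℚ (Jnk n k)).comp (toFin n)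

/-! ### Corners, insertions and the induction/extension operators -/

/-- `v` is an external corner of `μ`. -/
def IsCorner (μ : YoungDiagram) (v : ℕ × ℕ) : Prop :=
  v ∉ μ.cells ∧ ∃ ν : YoungDiagram, ν.cells = insert v μ.cells

/-- `S +̃ v := ev (ev S + v)`, where `+ v` places the entry `n + 1` in the box `v`. -/
def Sadd (n : ℕ) (S : Tab) (v : ℕ × ℕ) : Tab :=
  evac (n + 1) (Function.update (evac n S) v (n + 1))

/-- `δ^{S,v}`: `0` if `v` lies strictly below the row of `n` in `ev S`, and `1` otherwise. -/
def deltaSV (n : ℕ) (S : Tab) (v : ℕ × ℕ) : ℕ :=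
  if rowIdx (evac n S) n < v.1 then 0 else 1

/-- `h + δ·1_t`: add `δ` to the coordinate `t` of `h` when `t ≥ 1`; do nothing for `t = 0`. -/
def addAt (h : ℕ → ℕ) (t δ : ℕ) : ℕ → ℕ := fun r =>
  if r = t ∧ 1 ≤ t then h r + δ else h r

/-- The induction operator on a single summand:
`Ind_t V^S_h := ⊕_{v ∈ EC(λ)} V^{S +̃ v}_{h + δ^{S,v}·1_t}`. -/
def IndVSh (t n : ℕ) (μ : YoungDiagram) (S : Tab) (h : ℕ → ℕ) :
    Submodule ℚ (MvPolynomial ℕ ℚ) :=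
  ⨆ v : ℕ × ℕ, ⨆ _ : IsCorner μ v,
    VSh (n + 1) (insert v μ.cells) (Sadd n S v) (addAt h t (deltaSV n S v))

/-- The extension operator on a single summand:
`Ext V^S_h := ⊕_{v ∈ EC(λ), δ^{S,v} = 1} V^{S +̃ v}_h`. -/
def ExtVSh (n : ℕ) (μ : YoungDiagram) (S : Tab) (h : ℕ → ℕ) :
    Submodule ℚ (MvPolynomial ℕ ℚ) :=
  ⨆ v : ℕ × ℕ, ⨆ _ : IsCorner μ v ∧ deltaSV n S v = 1,
    VSh (n + 1) (insert v μ.cells) (Sadd n S v) h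

/-- `Ind_t R_{n,I}`, applied summand-by-summand to the decomposition of `R_{n,I}`. -/
def IndR (t n : ℕ) (I : Finset ℕ) : Submodule ℚ (MvPolynomial ℕ ℚ) :=
  ⨆ q : SIdx n I, IndVSh t n q.1.1 q.1.2 (hSI n I q.1.2)

/-- `Ext R_{n,I}`, applied summand-by-summand. -/
def ExtR (n : ℕ) (I : Finset ℕ) : Submodule ℚ (MvPolynomial ℕ ℚ) :=
  ⨆ q : SIdx n I, ExtVSh n q.1.1 q.1.2 (hSI n I q.1.2)

/-- `Ind_t R^hom_{n,I}`, applied summand-by-summand. -/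
def IndRhom (t n : ℕ) (I : Finset ℕ) : Submodule ℚ (MvPolynomial ℕ ℚ) :=
  ⨆ q : SIdx n I, IndVSh t n q.1.1 q.1.2 (hInd n I q.1.2)

/-- `Ext R^hom_{n,I}`, applied summand-by-summand. -/
def ExtRhom (n : ℕ) (I : Finset ℕ) : Submodule ℚ (MvPolynomial ℕ ℚ) :=
  ⨆ q : SIdx n I, ExtVSh n q.1.1 q.1.2 (hInd n I q.1.2)

/-- The lift `R̃_{n,k} = ⊕_{|I| = k-1} R_{n,I}` of the quotient `R_{n,k}`. -/
def Rtil (n k : ℕ) : Submodule ℚ (MvPolynomial ℕ ℚ) :=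
  ⨆ I : Finset ℕ, ⨆ _ : I ⊆ Finset.Ioo 0 n ∧ I.card + 1 = k, RnI n I

/-! ### The extended column group -/

/-- The length of column `c` of a tableau. -/
def colLenT (n : ℕ) (T : Tab) (c : ℕ) : ℕ :=
  ((Finset.range (n + 1)).filter fun r => T (r, c) ≠ 0).card

/-- `q_a`: the number of columns of length `> a` (columns of length `a` occupy the
`0`-indexed columns `q_a, …, q_a + t_a - 1`). -/
def qaT (n : ℕ) (T : Tab) (a : ℕ) : ℕ :=
  ((Finset.range (n + 1)).filter fun c => a < colLenT n T c).card

/-- `t_a`: the number of columns of length `a`. -/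
def taT (n : ℕ) (T : Tab) (a : ℕ) : ℕ :=
  ((Finset.range (n + 1)).filter fun c => colLenT n T c = a).card

/-- The function underlying the permutation `η_T`: the entry in row `j` of column `q_a + i`
is sent to the entry in row `j` of column `q_a + η(i)`; everything else is fixed. -/
def etaFun (n : ℕ) (T : Tab) (a : ℕ) (η : Equiv.Perm ℕ) : ℕ → ℕ := fun m =>
  let c := colIdx T m
  if 1 ≤ m ∧ m ≤ n ∧ qaT n T a ≤ c ∧ c < qaT n T a + taT n T a then
    T (rowIdx T m, qaT n T a + η (c - qaT n T a))
  else m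

/-- The set of the permutations `η_T` (over all `a ≥ 1` and all `η ∈ S_{t_a}`). -/
def etaSet (n : ℕ) (T : Tab) : Set (Equiv.Perm ℕ) :=
  {w | ∃ a, 1 ≤ a ∧ ∃ η : Equiv.Perm ℕ, (∀ i, taT n T a ≤ i → η i = i) ∧
    ⇑w = etaFun n T a η}

/-- The subgroup generated by the permutations `η_T` (a copy of `Π_a S_{t_a}`). -/
def etaSubgroup (n : ℕ) (T : Tab) : Subgroup (Equiv.Perm ℕ) :=
  Subgroup.closure (etaSet n T)

/-- The column group `C(T)` as a subgroup. -/
def colSubgroup (n : ℕ) (T : Tab) : Subgroup (Equiv.Perm ℕ) :=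
  Subgroup.closure (colGroupSet n T)

/-- The extended column group `C̃(T)`, generated by `C(T)` and the `η_T`. -/
def extColSubgroup (n : ℕ) (T : Tab) : Subgroup (Equiv.Perm ℕ) :=
  Subgroup.closure (colGroupSet n T ∪ etaSet n T)

/-- The sign of a permutation of `ℕ` supported on `{1, …, n}`. -/
def signOn (n : ℕ) (σ : Equiv.Perm ℕ) : ℤ :=
  if h : ∃ τ : Equiv.Perm (Fin n), embedPerm n τ = σ then
    (Equiv.Perm.sign h.choose : ℤ) else 0

/-! ### Semistandard tableaux, (generalized) cocharge tableaux -/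

/-- A semistandard filling of the given cells: rows weakly increase, columns strictly
increase (entries outside the cells are normalized to `0`). -/
def IsSSYTOn (cells : Finset (ℕ × ℕ)) (C : Tab) : Prop :=
  (∀ c ∉ cells, C c = 0) ∧
  (∀ c₁ ∈ cells, ∀ c₂ ∈ cells, c₁.1 = c₂.1 → c₁.2 ≤ c₂.2 → C c₁ ≤ C c₂) ∧
  (∀ c₁ ∈ cells, ∀ c₂ ∈ cells, c₁.2 = c₂.2 → c₁.1 < c₂.1 → C c₁ < C c₂)

/-- A generalized cocharge tableau with entries exactly `{0, …, k-1}`. -/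
def IsGCT (cells : Finset (ℕ × ℕ)) (C : Tab) (k : ℕ) : Prop :=
  IsSSYTOn cells C ∧ (∀ c ∈ cells, C c < k) ∧ ∀ h < k, ∃ c ∈ cells, C c = h

/-- The type of a generalized cocharge tableau: the set of cumulative multiplicities
`#{c : C c < h}` for `1 ≤ h ≤ k - 1`. -/
def gctType (cells : Finset (ℕ × ℕ)) (C : Tab) (k : ℕ) : Finset ℕ :=
  (Finset.Ico 1 k).image fun h => (cells.filter fun c => C c < h).card

/-- The standardization of a semistandard tableau: entries are replaced by `1, …, n`,
processing the values in increasing order and, for equal values, from left to right. -/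
def stdz (cells : Finset (ℕ × ℕ)) (C : Tab) : Tab := fun c =>
  if c ∈ cells then
    (cells.filter fun c' => C c' < C c ∨
      (C c' = C c ∧ (c'.2 < c.2 ∨ (c'.2 = c.2 ∧ c'.1 ≤ c.1)))).card
  else 0

/-- A cocharge tableau of shape `μ`: one of the form `ct S` for a standard `S`. -/
def IsCCT (μ : YoungDiagram) (C : Tab) : Prop :=
  ∃ S : Tab, IsStandard μ S ∧ ctTab μ.cells.card S = C

/-- `k` for a tableau: one more than the maximal entry. -/
def kOf (cells : Finset (ℕ × ℕ)) (C : Tab) : ℕ := cells.sup C + 1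

/-- `Dsp^c(C) := {n - i : i ∈ J}`, `J` the type of the cocharge tableau `C`. -/
def Dspc (n : ℕ) (cells : Finset (ℕ × ℕ)) (C : Tab) : Finset ℕ :=
  (gctType cells C (kOf cells C)).image fun i => n - i

/-- The entry sum `Σ(C)`. -/
def entrySum (cells : Finset (ℕ × ℕ)) (C : Tab) : ℕ := ∑ c ∈ cells, C c

/-- `C +̂ v := ct (ct⁻¹(C) +̃ v)`, where `ct⁻¹` is the standardization. -/
def Cadd (n : ℕ) (μ : YoungDiagram) (C : Tab) (v : ℕ × ℕ) : Tab :=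
  ctTab (n + 1) (Sadd n (stdz μ.cells C) v)

/-- The standard Young tableau `S⁰` of shape `μ` filling the rows consecutively. -/
def rowWordTab (μ : YoungDiagram) : Tab := fun c =>
  if c ∈ μ.cells then (∑ r ∈ Finset.range c.1, μ.rowLen r) + c.2 + 1 else 0

/-- The word of an ordered set partition: the blocks listed in order, each sorted
increasingly. -/
def opWord (k : ℕ) (B : ℕ → Finset ℕ) : List ℕ :=
  (List.range k).foldr (fun h acc => (B h).sort (· ≤ ·) ++ acc) []

/-- Renaming the variables of a power series along a permutation. -/
def permSeries (g : Equiv.Perm ℕ) (F : MvPowerSeries ℕ ℚ) : MvPowerSeries ℕ ℚ :=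
  fun m => F (Finsupp.mapDomain ⇑g⁻¹ m)


section

variable {n : ℕ} {μ : YoungDiagram} {T : Tab}

lemma T_mem (hμ : μ.cells.card = n) (hT : IsFilling μ T) {c : ℕ × ℕ} (hc : c ∈ μ.cells) :
    1 ≤ T c ∧ T c ≤ n := by
  have := hT.2.mapsTo hc
  rw [Set.mem_Icc, hμ] at this
  exact this

lemma T_ne_zero_iff (hμ : μ.cells.card = n) (hT : IsFilling μ T) (c : ℕ × ℕ) :
    T c ≠ 0 ↔ c ∈ μ.cells := by
  constructor
  · intro h
    by_contra hc
    exact h (hT.1 c hc)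
  · intro h
    have := (T_mem hμ hT h).1
    omega

lemma rowIdx_apply (hμ : μ.cells.card = n) (hT : IsFilling μ T) {p : ℕ × ℕ}
    (hp : p ∈ μ.cells) : rowIdx T (T p) = p.1 := by
  have hset : {r | ∃ c, T (r, c) = T p} = {p.1} := by
    ext r
    simp only [Set.mem_setOf_eq, Set.mem_singleton_iff]
    constructor
    · rintro ⟨c, hc⟩
      have hmem : (r, c) ∈ μ.cells := by
        rw [← T_ne_zero_iff hμ hT]
        rw [hc]
        have := (T_mem hμ hT hp).1; omega
      have := hT.2.injOn hmem hp hc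
      exact congrArg Prod.fst this
    · rintro rfl
      exact ⟨p.2, rfl⟩
  rw [rowIdx, hset, csInf_singleton]

lemma colIdx_apply (hμ : μ.cells.card = n) (hT : IsFilling μ T) {p : ℕ × ℕ}
    (hp : p ∈ μ.cells) : colIdx T (T p) = p.2 := by
  have hrow := rowIdx_apply hμ hT hp
  have hset : {c | T (rowIdx T (T p), c) = T p} = {p.2} := by
    rw [hrow]
    ext c
    simp only [Set.mem_setOf_eq, Set.mem_singleton_iff]
    constructor
    · intro hc
      have hmem : (p.1, c) ∈ μ.cells := by
        rw [← T_ne_zero_iff hμ hT]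
        rw [hc]
        have := (T_mem hμ hT hp).1; omega
      have := hT.2.injOn hmem hp hc
      exact congrArg Prod.snd this
    · rintro rfl
      rfl
  rw [colIdx, hset, csInf_singleton]

lemma posOf_apply (hμ : μ.cells.card = n) (hT : IsFilling μ T) {p : ℕ × ℕ}
    (hp : p ∈ μ.cells) : posOf T (T p) = p :=
  Prod.ext (rowIdx_apply hμ hT hp) (colIdx_apply hμ hT hp)

lemma exists_cell (hμ : μ.cells.card = n) (hT : IsFilling μ T) {m : ℕ}
    (h1 : 1 ≤ m) (h2 : m ≤ n) : posOf T m ∈ μ.cells ∧ T (posOf T m) = m := by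
  obtain ⟨p, hp, hTp⟩ := hT.2.surjOn (by rw [Set.mem_Icc, hμ]; exact ⟨h1, h2⟩ :
    m ∈ Set.Icc 1 μ.cells.card)
  rw [← hTp, posOf_apply hμ hT hp]
  exact ⟨hp, rfl⟩

lemma mem_cells_iff_lt_colLen {r c : ℕ} : (r, c) ∈ μ.cells ↔ r < μ.colLen c := by
  rw [YoungDiagram.mem_cells, YoungDiagram.mem_iff_lt_colLen]

lemma colLen_le (hμ : μ.cells.card = n) (c : ℕ) : μ.colLen c ≤ n := by
  rw [μ.colLen_eq_card, ← hμ]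
  exact Finset.card_le_card (fun x hx => (YoungDiagram.mem_cells x).mpr
    (YoungDiagram.mem_col_iff.mp hx).1)

lemma colLenT_eq (hμ : μ.cells.card = n) (hT : IsFilling μ T) (c : ℕ) :
    colLenT n T c = μ.colLen c := by
  rw [colLenT]
  have : (Finset.range (n + 1)).filter (fun r => T (r, c) ≠ 0) =
      Finset.range (μ.colLen c) := by
    ext r
    simp only [Finset.mem_filter, Finset.mem_range]
    rw [T_ne_zero_iff hμ hT, mem_cells_iff_lt_colLen]
    have := colLen_le hμ c
    omega
  rw [this, Finset.card_range]


lemma downclosed_eq_range {s : Finset ℕ} (h : ∀ x ∈ s, ∀ y, y < x → y ∈ s) :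
    s = Finset.range s.card := by
  have h1 : ∀ k ∈ s, k < s.card := by
    intro k hk
    have hsub : Finset.range (k + 1) ⊆ s := by
      intro y hy
      rw [Finset.mem_range] at hy
      rcases Nat.lt_succ_iff_lt_or_eq.mp hy with hy' | rfl
      · exact h k hk y hy'
      · exact hk
    have := Finset.card_le_card hsub
    rw [Finset.card_range] at this
    omega
  have h2 : ∀ k, k < s.card → k ∈ s := by
    intro k hk
    by_contra hk'
    have hsub : s ⊆ Finset.range k := by
      intro x hx
      rw [Finset.mem_range]
      rcases lt_trichotomy x k with h' | rfl | h'
      · exact h'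
      · exact absurd hx hk'
      · exact absurd (h x hx k h') hk'
    have := Finset.card_le_card hsub
    rw [Finset.card_range] at this
    omega
  ext k
  rw [Finset.mem_range]
  exact ⟨h1 k, h2 k⟩

variable (hμ : μ.cells.card = n) (hT : IsFilling μ T)

lemma col_bound (hμ : μ.cells.card = n) {c : ℕ} (hc : 1 ≤ μ.colLen c) : c < n + 1 := by
  have hsub : (Finset.range (c + 1)).image (fun i => ((0 : ℕ), i)) ⊆ μ.cells := by
    intro x hx
    rw [Finset.mem_image] at hx
    obtain ⟨i, hi, rfl⟩ := hx
    rw [Finset.mem_range] at hi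
    rw [mem_cells_iff_lt_colLen]
    calc 1 ≤ μ.colLen c := hc
    _ ≤ μ.colLen i := μ.colLen_anti i c (by omega)
  have hcard := Finset.card_le_card hsub
  rw [Finset.card_image_of_injective _ (fun i j hij => congrArg Prod.snd hij),
    Finset.card_range, hμ] at hcard
  omega

/-- For `b ≥ 1`, `c` is among the first `#{c' : b ≤ colLen c'}` columns iff `b ≤ colLen c`. -/
lemma card_filter_le_colLen (hμ : μ.cells.card = n) {b : ℕ} (hb : 1 ≤ b) (c : ℕ) :
    c < ((Finset.range (n + 1)).filter (fun c' => b ≤ μ.colLen c')).card ↔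
      b ≤ μ.colLen c := by
  set F := (Finset.range (n + 1)).filter (fun c' => b ≤ μ.colLen c') with hF
  have hmem : ∀ c', c' ∈ F ↔ b ≤ μ.colLen c' := by
    intro c'
    rw [hF, Finset.mem_filter, Finset.mem_range]
    constructor
    · exact fun h => h.2
    · intro h
      exact ⟨col_bound hμ (le_trans hb h), h⟩
  have hdc : ∀ x ∈ F, ∀ y, y < x → y ∈ F := by
    intro x hx y hy
    rw [hmem] at hx ⊢
    exact le_trans hx (μ.colLen_anti y x (by omega))
  have := downclosed_eq_range hdc
  constructor
  · intro h
    rw [← hmem, this, Finset.mem_range]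
    exact h
  · intro h
    rw [← Finset.mem_range, ← this, hmem]
    exact h

lemma lt_qa_iff (hμ : μ.cells.card = n) (hT : IsFilling μ T) (a c : ℕ) :
    c < qaT n T a ↔ a + 1 ≤ μ.colLen c := by
  have : qaT n T a = ((Finset.range (n + 1)).filter (fun c' => a + 1 ≤ μ.colLen c')).card := by
    rw [qaT]
    congr 1
    apply Finset.filter_congr
    intro x _
    rw [colLenT_eq hμ hT]
    constructor <;> omega
  rw [this]
  exact card_filter_le_colLen hμ (by omega) c

lemma lt_qa_add_ta_iff (hμ : μ.cells.card = n) (hT : IsFilling μ T) {a : ℕ} (ha : 1 ≤ a)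
    (c : ℕ) : c < qaT n T a + taT n T a ↔ a ≤ μ.colLen c := by
  have hsplit : (Finset.range (n + 1)).filter (fun c' => a ≤ μ.colLen c') =
      (Finset.range (n + 1)).filter (fun c' => a + 1 ≤ μ.colLen c') ∪
      (Finset.range (n + 1)).filter (fun c' => μ.colLen c' = a) := by
    rw [← Finset.filter_or]
    apply Finset.filter_congr
    intro x _
    constructor <;> omega
  have hdisj : Disjoint ((Finset.range (n + 1)).filter (fun c' => a + 1 ≤ μ.colLen c'))
      ((Finset.range (n + 1)).filter (fun c' => μ.colLen c' = a)) := by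
    rw [Finset.disjoint_left]
    intro x hx hx'
    rw [Finset.mem_filter] at hx hx'
    omega
  have hq : qaT n T a = ((Finset.range (n + 1)).filter
      (fun c' => a + 1 ≤ μ.colLen c')).card := by
    rw [qaT]
    congr 1
    apply Finset.filter_congr
    intro x _
    rw [colLenT_eq hμ hT]
    constructor <;> omega
  have ht : taT n T a = ((Finset.range (n + 1)).filter
      (fun c' => μ.colLen c' = a)).card := by
    rw [taT]
    congr 1
    apply Finset.filter_congr
    intro x _
    rw [colLenT_eq hμ hT]
  rw [hq, ht, ← Finset.card_union_of_disjoint hdisj, ← hsplit]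
  exact card_filter_le_colLen hμ ha c

lemma colLen_eq_iff (hμ : μ.cells.card = n) (hT : IsFilling μ T) {a : ℕ} (ha : 1 ≤ a)
    (c : ℕ) : μ.colLen c = a ↔ qaT n T a ≤ c ∧ c < qaT n T a + taT n T a := by
  have h1 := lt_qa_iff hμ hT a c
  have h2 := lt_qa_add_ta_iff hμ hT ha c
  omega


lemma etaFun_def (a : ℕ) (η : Equiv.Perm ℕ) (m : ℕ) :
    etaFun n T a η m =
      if 1 ≤ m ∧ m ≤ n ∧ qaT n T a ≤ colIdx T m ∧
          colIdx T m < qaT n T a + taT n T a then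
        T (rowIdx T m, qaT n T a + η (colIdx T m - qaT n T a))
      else m := rfl

lemma etaFun_of_neg {a : ℕ} {η : Equiv.Perm ℕ} {m : ℕ}
    (h : ¬(1 ≤ m ∧ m ≤ n ∧ qaT n T a ≤ colIdx T m ∧
      colIdx T m < qaT n T a + taT n T a)) : etaFun n T a η m = m := by
  rw [etaFun_def, if_neg h]

lemma perm_fix_lt {t : ℕ} {η : Equiv.Perm ℕ} (hη : ∀ i, t ≤ i → η i = i) {i : ℕ}
    (hi : i < t) : η i < t := by
  by_contra h
  push_neg at h
  have := η.injective (hη (η i) h)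
  omega

lemma perm_fix_inv {t : ℕ} {η : Equiv.Perm ℕ} (hη : ∀ i, t ≤ i → η i = i) :
    ∀ i, t ≤ i → η⁻¹ i = i := by
  intro i hi
  apply η.injective
  rw [← Equiv.Perm.mul_apply, mul_inv_cancel, Equiv.Perm.one_apply, hη i hi]

lemma etaFun_spec (hμ : μ.cells.card = n) (hT : IsFilling μ T) {a : ℕ} (ha : 1 ≤ a)
    {η : Equiv.Perm ℕ} (hη : ∀ i, taT n T a ≤ i → η i = i) {m : ℕ}
    (h1 : 1 ≤ m) (h2 : m ≤ n) (h3 : qaT n T a ≤ colIdx T m)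
    (h4 : colIdx T m < qaT n T a + taT n T a) :
    etaFun n T a η m = T (rowIdx T m, qaT n T a + η (colIdx T m - qaT n T a)) ∧
    (rowIdx T m, qaT n T a + η (colIdx T m - qaT n T a)) ∈ μ.cells ∧
    rowIdx T (etaFun n T a η m) = rowIdx T m ∧
    colIdx T (etaFun n T a η m) = qaT n T a + η (colIdx T m - qaT n T a) ∧
    1 ≤ etaFun n T a η m ∧ etaFun n T a η m ≤ n ∧
    qaT n T a ≤ colIdx T (etaFun n T a η m) ∧
    colIdx T (etaFun n T a η m) < qaT n T a + taT n T a := by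
  obtain ⟨hpos, hTpos⟩ := exists_cell hμ hT h1 h2
  have hposOf : posOf T m = (rowIdx T m, colIdx T m) := rfl
  -- the column of m has length a, so rowIdx T m < a
  have hcolm : μ.colLen (colIdx T m) = a := (colLen_eq_iff hμ hT ha _).mpr ⟨h3, h4⟩
  have hrowlt : rowIdx T m < a := by
    rw [hposOf] at hpos
    rw [mem_cells_iff_lt_colLen] at hpos
    omega
  -- the target column also has length a
  have hηlt : η (colIdx T m - qaT n T a) < taT n T a :=
    perm_fix_lt hη (by omega)
  have hcolm' : μ.colLen (qaT n T a + η (colIdx T m - qaT n T a)) = a :=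
    (colLen_eq_iff hμ hT ha _).mpr ⟨by omega, by omega⟩
  have hcell : (rowIdx T m, qaT n T a + η (colIdx T m - qaT n T a)) ∈ μ.cells := by
    rw [mem_cells_iff_lt_colLen]
    omega
  have heq : etaFun n T a η m =
      T (rowIdx T m, qaT n T a + η (colIdx T m - qaT n T a)) := by
    rw [etaFun_def, if_pos ⟨h1, h2, h3, h4⟩]
  have hmem := T_mem hμ hT hcell
  have hrow := rowIdx_apply hμ hT hcell
  have hcol := colIdx_apply hμ hT hcell
  rw [← heq] at hmem hrow hcol
  refine ⟨heq, hcell, hrow, hcol, hmem.1, hmem.2, ?_, ?_⟩ <;> rw [hcol] <;> omega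

lemma etaFun_comp (hμ : μ.cells.card = n) (hT : IsFilling μ T) {a : ℕ} (ha : 1 ≤ a)
    {η₁ η₂ : Equiv.Perm ℕ} (hη₁ : ∀ i, taT n T a ≤ i → η₁ i = i)
    (hη₂ : ∀ i, taT n T a ≤ i → η₂ i = i) :
    etaFun n T a (η₁ * η₂) = etaFun n T a η₁ ∘ etaFun n T a η₂ := by
  funext m
  simp only [Function.comp_apply]
  by_cases h : 1 ≤ m ∧ m ≤ n ∧ qaT n T a ≤ colIdx T m ∧
      colIdx T m < qaT n T a + taT n T a
  · obtain ⟨h1, h2, h3, h4⟩ := h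
    obtain ⟨heq2, _, hrow2, hcol2, h1', h2', h3', h4'⟩ := etaFun_spec hμ hT ha hη₂ h1 h2 h3 h4
    obtain ⟨heq1, _, _, _, _, _, _, _⟩ := etaFun_spec hμ hT ha hη₁ h1' h2' h3' h4'
    have hη₁₂ : ∀ i, taT n T a ≤ i → (η₁ * η₂) i = i := by
      intro i hi
      rw [Equiv.Perm.mul_apply, hη₂ i hi, hη₁ i hi]
    obtain ⟨heq12, _, _, _, _, _, _, _⟩ := etaFun_spec hμ hT ha hη₁₂ h1 h2 h3 h4
    rw [heq12, heq1, hrow2, hcol2]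
    congr 2
    rw [Nat.add_sub_cancel_left, Equiv.Perm.mul_apply]
  · simp only [etaFun_of_neg h]

lemma etaFun_one (hμ : μ.cells.card = n) (hT : IsFilling μ T) {a : ℕ} (ha : 1 ≤ a) :
    etaFun n T a 1 = id := by
  funext m
  simp only [id_eq]
  by_cases h : 1 ≤ m ∧ m ≤ n ∧ qaT n T a ≤ colIdx T m ∧
      colIdx T m < qaT n T a + taT n T a
  · obtain ⟨h1, h2, h3, h4⟩ := h
    obtain ⟨heq, _, _, _, _, _, _, _⟩ := etaFun_spec hμ hT ha
      (fun i _ => rfl : ∀ i, taT n T a ≤ i → (1 : Equiv.Perm ℕ) i = i) h1 h2 h3 h4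
    rw [heq]
    have : qaT n T a + (1 : Equiv.Perm ℕ) (colIdx T m - qaT n T a) = colIdx T m := by
      simp only [Equiv.Perm.one_apply]
      omega
    rw [this]
    exact (exists_cell hμ hT h1 h2).2
  · exact etaFun_of_neg h

lemma exists_etaPerm (hμ : μ.cells.card = n) (hT : IsFilling μ T) {a : ℕ} (ha : 1 ≤ a)
    {η : Equiv.Perm ℕ} (hη : ∀ i, taT n T a ≤ i → η i = i) :
    ∃ w : Equiv.Perm ℕ, ⇑w = etaFun n T a η := by
  have hli : Function.LeftInverse (etaFun n T a η⁻¹) (etaFun n T a η) := by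
    intro x
    have : etaFun n T a η⁻¹ ∘ etaFun n T a η = etaFun n T a (η⁻¹ * η) :=
      (etaFun_comp hμ hT ha (perm_fix_inv hη) hη).symm
    calc (etaFun n T a η⁻¹) (etaFun n T a η x) = etaFun n T a (η⁻¹ * η) x := by
          rw [← this]; rfl
    _ = x := by rw [inv_mul_cancel, etaFun_one hμ hT ha]; rfl
  have hri : Function.RightInverse (etaFun n T a η⁻¹) (etaFun n T a η) := by
    intro x
    have : etaFun n T a η ∘ etaFun n T a η⁻¹ = etaFun n T a (η * η⁻¹) :=
      (etaFun_comp hμ hT ha hη (perm_fix_inv hη)).symm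
    calc (etaFun n T a η) (etaFun n T a η⁻¹ x) = etaFun n T a (η * η⁻¹) x := by
          rw [← this]; rfl
    _ = x := by rw [mul_inv_cancel, etaFun_one hμ hT ha]; rfl
  exact ⟨⟨etaFun n T a η, etaFun n T a η⁻¹, hli, hri⟩, rfl⟩

lemma etaFun_mem_row (hμ : μ.cells.card = n) (hT : IsFilling μ T) {a : ℕ} (ha : 1 ≤ a)
    {η : Equiv.Perm ℕ} (hη : ∀ i, taT n T a ≤ i → η i = i) (w : Equiv.Perm ℕ)
    (hw : ⇑w = etaFun n T a η) : w ∈ rowGroupSet n T := by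
  constructor
  · intro i hi
    show w i = i
    rw [hw]
    exact etaFun_of_neg (by omega)
  · intro i hi
    rw [Finset.mem_Icc] at hi
    show rowIdx T (w i) = rowIdx T i
    rw [hw]
    by_cases h : qaT n T a ≤ colIdx T i ∧ colIdx T i < qaT n T a + taT n T a
    · exact (etaFun_spec hμ hT ha hη hi.1 hi.2 h.1 h.2).2.2.1
    · rw [etaFun_of_neg (by tauto)]


lemma etaFun_commute (hμ : μ.cells.card = n) (hT : IsFilling μ T) {a a' : ℕ}
    (ha : 1 ≤ a) (ha' : 1 ≤ a') (hne : a ≠ a') {η η' : Equiv.Perm ℕ}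
    (hη : ∀ i, taT n T a ≤ i → η i = i) (hη' : ∀ i, taT n T a' ≤ i → η' i = i) :
    etaFun n T a η ∘ etaFun n T a' η' = etaFun n T a' η' ∘ etaFun n T a η := by
  funext m
  simp only [Function.comp_apply]
  by_cases hm : 1 ≤ m ∧ m ≤ n
  · by_cases hwin : qaT n T a ≤ colIdx T m ∧ colIdx T m < qaT n T a + taT n T a
    · -- m in window a; not in window a'
      have hcol : μ.colLen (colIdx T m) = a := (colLen_eq_iff hμ hT ha _).mpr hwin
      have hwin' : ¬(qaT n T a' ≤ colIdx T m ∧ colIdx T m < qaT n T a' + taT n T a') := by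
        intro hw
        have h' := (colLen_eq_iff hμ hT ha' (colIdx T m)).mpr hw
        omega
      obtain ⟨_, _, _, hcolw, h1', h2', h3', h4'⟩ :=
        etaFun_spec hμ hT ha hη hm.1 hm.2 hwin.1 hwin.2
      have hcolw' : μ.colLen (colIdx T (etaFun n T a η m)) = a :=
        (colLen_eq_iff hμ hT ha _).mpr ⟨h3', h4'⟩
      have hnw : ¬(qaT n T a' ≤ colIdx T (etaFun n T a η m) ∧
          colIdx T (etaFun n T a η m) < qaT n T a' + taT n T a') := by
        intro hw
        have h' := (colLen_eq_iff hμ hT ha' (colIdx T (etaFun n T a η m))).mpr hw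
        omega
      rw [etaFun_of_neg (by tauto : ¬(1 ≤ m ∧ m ≤ n ∧ qaT n T a' ≤ colIdx T m ∧
        colIdx T m < qaT n T a' + taT n T a')),
        etaFun_of_neg (by tauto : ¬(1 ≤ etaFun n T a η m ∧ etaFun n T a η m ≤ n ∧
          qaT n T a' ≤ colIdx T (etaFun n T a η m) ∧
          colIdx T (etaFun n T a η m) < qaT n T a' + taT n T a'))]
    · by_cases hwin' : qaT n T a' ≤ colIdx T m ∧ colIdx T m < qaT n T a' + taT n T a'
      · obtain ⟨_, _, _, hcolw, h1', h2', h3', h4'⟩ :=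
          etaFun_spec hμ hT ha' hη' hm.1 hm.2 hwin'.1 hwin'.2
        have hcolw' : μ.colLen (colIdx T (etaFun n T a' η' m)) = a' :=
          (colLen_eq_iff hμ hT ha' _).mpr ⟨h3', h4'⟩
        have hnw : ¬(qaT n T a ≤ colIdx T (etaFun n T a' η' m) ∧
            colIdx T (etaFun n T a' η' m) < qaT n T a + taT n T a) := by
          intro hw
          have h' := (colLen_eq_iff hμ hT ha (colIdx T (etaFun n T a' η' m))).mpr hw
          omega
        rw [etaFun_of_neg (by tauto : ¬(1 ≤ m ∧ m ≤ n ∧ qaT n T a ≤ colIdx T m ∧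
          colIdx T m < qaT n T a + taT n T a)),
          etaFun_of_neg (by tauto : ¬(1 ≤ etaFun n T a' η' m ∧ etaFun n T a' η' m ≤ n ∧
            qaT n T a ≤ colIdx T (etaFun n T a' η' m) ∧
            colIdx T (etaFun n T a' η' m) < qaT n T a + taT n T a))]
      · simp only [etaFun_of_neg (show ¬(1 ≤ m ∧ m ≤ n ∧ qaT n T a' ≤ colIdx T m ∧
          colIdx T m < qaT n T a' + taT n T a') by tauto),
          etaFun_of_neg (show ¬(1 ≤ m ∧ m ≤ n ∧ qaT n T a ≤ colIdx T m ∧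
          colIdx T m < qaT n T a + taT n T a) by tauto)]
  · simp only [etaFun_of_neg (show ¬(1 ≤ m ∧ m ≤ n ∧ qaT n T a' ≤ colIdx T m ∧
      colIdx T m < qaT n T a' + taT n T a') by tauto),
      etaFun_of_neg (show ¬(1 ≤ m ∧ m ≤ n ∧ qaT n T a ≤ colIdx T m ∧
      colIdx T m < qaT n T a + taT n T a) by tauto)]

lemma etaFun_injective (hμ : μ.cells.card = n) (hT : IsFilling μ T) {a : ℕ} (ha : 1 ≤ a)
    {η₁ η₂ : Equiv.Perm ℕ} (hη₁ : ∀ i, taT n T a ≤ i → η₁ i = i)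
    (hη₂ : ∀ i, taT n T a ≤ i → η₂ i = i)
    (hEq : etaFun n T a η₁ = etaFun n T a η₂) : η₁ = η₂ := by
  apply Equiv.ext
  intro i
  by_cases hi : taT n T a ≤ i
  · rw [hη₁ i hi, hη₂ i hi]
  · push_neg at hi
    have hcol : μ.colLen (qaT n T a + i) = a :=
      (colLen_eq_iff hμ hT ha _).mpr ⟨by omega, by omega⟩
    have hcell : ((0 : ℕ), qaT n T a + i) ∈ μ.cells := by
      rw [mem_cells_iff_lt_colLen]
      omega
    set m := T (0, qaT n T a + i) with hm
    obtain ⟨h1, h2⟩ := T_mem hμ hT hcell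
    have hrow : rowIdx T m = 0 := rowIdx_apply hμ hT hcell
    have hcolm : colIdx T m = qaT n T a + i := colIdx_apply hμ hT hcell
    have h3 : qaT n T a ≤ colIdx T m := by omega
    have h4 : colIdx T m < qaT n T a + taT n T a := by omega
    obtain ⟨heq1, hcell1, _, _, _, _, _, _⟩ := etaFun_spec hμ hT ha hη₁ h1 h2 h3 h4
    obtain ⟨heq2, hcell2, _, _, _, _, _, _⟩ := etaFun_spec hμ hT ha hη₂ h1 h2 h3 h4
    have : T (rowIdx T m, qaT n T a + η₁ (colIdx T m - qaT n T a)) =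
        T (rowIdx T m, qaT n T a + η₂ (colIdx T m - qaT n T a)) := by
      rw [← heq1, ← heq2, hEq]
    have := hT.2.injOn hcell1 hcell2 this
    have := congrArg Prod.snd this
    simp only at this
    rw [hcolm, Nat.add_sub_cancel_left] at this
    omega


lemma suppIn_one : SuppIn n 1 := fun _ _ => rfl

lemma suppIn_mul {w₁ w₂ : Equiv.Perm ℕ} (h₁ : SuppIn n w₁) (h₂ : SuppIn n w₂) :
    SuppIn n (w₁ * w₂) := by
  intro i hi
  show w₁ (w₂ i) = i
  rw [h₂ i hi, h₁ i hi]

lemma suppIn_inv {w : Equiv.Perm ℕ} (h : SuppIn n w) : SuppIn n w⁻¹ := by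
  intro i hi
  apply w.injective
  rw [← Equiv.Perm.mul_apply, mul_inv_cancel, Equiv.Perm.one_apply, h i hi]

lemma suppIn_maps {w : Equiv.Perm ℕ} (h : SuppIn n w) {i : ℕ} (h1 : 1 ≤ i) (h2 : i ≤ n) :
    1 ≤ w i ∧ w i ≤ n := by
  by_contra hc
  have hor : w i = 0 ∨ n < w i := by omega
  have := w.injective (h (w i) hor)
  omega

/-- The row group as a bona fide subgroup. -/
def rowSG (n : ℕ) (T : Tab) : Subgroup (Equiv.Perm ℕ) where
  carrier := rowGroupSet n T
  one_mem' := ⟨suppIn_one, fun _ _ => rfl⟩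
  mul_mem' := by
    rintro w₁ w₂ ⟨hs₁, hr₁⟩ ⟨hs₂, hr₂⟩
    refine ⟨suppIn_mul hs₁ hs₂, fun i hi => ?_⟩
    rw [Finset.mem_Icc] at hi
    have hm := suppIn_maps hs₂ hi.1 hi.2
    show rowIdx T (w₁ (w₂ i)) = rowIdx T i
    rw [hr₁ (w₂ i) (Finset.mem_Icc.mpr hm), hr₂ i (Finset.mem_Icc.mpr hi)]
  inv_mem' := by
    rintro w ⟨hs, hr⟩
    refine ⟨suppIn_inv hs, fun i hi => ?_⟩
    rw [Finset.mem_Icc] at hi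
    have hm := suppIn_maps (suppIn_inv hs) hi.1 hi.2
    have := hr (w⁻¹ i) (Finset.mem_Icc.mpr hm)
    rw [← Equiv.Perm.mul_apply, mul_inv_cancel, Equiv.Perm.one_apply] at this
    exact this.symm

/-- The column group as a bona fide subgroup. -/
def colSG (n : ℕ) (T : Tab) : Subgroup (Equiv.Perm ℕ) where
  carrier := colGroupSet n T
  one_mem' := ⟨suppIn_one, fun _ _ => rfl⟩
  mul_mem' := by
    rintro w₁ w₂ ⟨hs₁, hr₁⟩ ⟨hs₂, hr₂⟩
    refine ⟨suppIn_mul hs₁ hs₂, fun i hi => ?_⟩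
    rw [Finset.mem_Icc] at hi
    have hm := suppIn_maps hs₂ hi.1 hi.2
    show colIdx T (w₁ (w₂ i)) = colIdx T i
    rw [hr₁ (w₂ i) (Finset.mem_Icc.mpr hm), hr₂ i (Finset.mem_Icc.mpr hi)]
  inv_mem' := by
    rintro w ⟨hs, hr⟩
    refine ⟨suppIn_inv hs, fun i hi => ?_⟩
    rw [Finset.mem_Icc] at hi
    have hm := suppIn_maps (suppIn_inv hs) hi.1 hi.2
    have := hr (w⁻¹ i) (Finset.mem_Icc.mpr hm)
    rw [← Equiv.Perm.mul_apply, mul_inv_cancel, Equiv.Perm.one_apply] at this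
    exact this.symm

lemma colSubgroup_eq (n : ℕ) (T : Tab) : colSubgroup n T = colSG n T := by
  rw [colSubgroup]
  exact Subgroup.closure_eq (colSG n T)

lemma mem_colSubgroup_iff {w : Equiv.Perm ℕ} :
    w ∈ colSubgroup n T ↔ w ∈ colGroupSet n T := by
  rw [colSubgroup_eq]
  exact Iff.rfl

lemma eta_le_rowSG (hμ : μ.cells.card = n) (hT : IsFilling μ T) :
    etaSubgroup n T ≤ rowSG n T := by
  rw [etaSubgroup]
  apply Subgroup.closure_le (rowSG n T) |>.mpr
  rintro w ⟨a, ha, η, hη, hw⟩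
  exact etaFun_mem_row hμ hT ha hη w hw

lemma row_col_eq_one (hμ : μ.cells.card = n) (hT : IsFilling μ T) {w : Equiv.Perm ℕ}
    (hr : w ∈ rowGroupSet n T) (hc : w ∈ colGroupSet n T) : w = 1 := by
  apply Equiv.ext
  intro m
  simp only [Equiv.Perm.one_apply]
  by_cases hm : 1 ≤ m ∧ m ≤ n
  · have hwm := suppIn_maps hr.1 hm.1 hm.2
    have hrow := hr.2 m (Finset.mem_Icc.mpr hm)
    have hcol := hc.2 m (Finset.mem_Icc.mpr hm)
    have hpos : posOf T (w m) = posOf T m := Prod.ext hrow hcol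
    have h1 := (exists_cell hμ hT hwm.1 hwm.2).2
    have h2 := (exists_cell hμ hT hm.1 hm.2).2
    calc w m = T (posOf T (w m)) := h1.symm
    _ = T (posOf T m) := by rw [hpos]
    _ = m := h2
  · exact hr.1 m (by omega)

lemma eta_inv_mem_etaSet {w : Equiv.Perm ℕ} (hμ : μ.cells.card = n)
    (hT : IsFilling μ T) (hw : w ∈ etaSet n T) : w⁻¹ ∈ etaSet n T := by
  obtain ⟨a, ha, η, hη, hweq⟩ := hw
  refine ⟨a, ha, η⁻¹, perm_fix_inv hη, ?_⟩
  funext x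
  have hfix : w (etaFun n T a η⁻¹ x) = x := by
    rw [hweq]
    have : etaFun n T a η ∘ etaFun n T a η⁻¹ = etaFun n T a (η * η⁻¹) :=
      (etaFun_comp hμ hT ha hη (perm_fix_inv hη)).symm
    calc etaFun n T a η (etaFun n T a η⁻¹ x) = etaFun n T a (η * η⁻¹) x := by
          rw [← this]; rfl
    _ = x := by rw [mul_inv_cancel, etaFun_one hμ hT ha]; rfl
  calc w⁻¹ x = w⁻¹ (w (etaFun n T a η⁻¹ x)) := by rw [hfix]
  _ = etaFun n T a η⁻¹ x := by rw [← Equiv.Perm.mul_apply, inv_mul_cancel, Equiv.Perm.one_apply]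

lemma eta_conj_col (hμ : μ.cells.card = n) (hT : IsFilling μ T) {w : Equiv.Perm ℕ}
    (hw : w ∈ etaSet n T) {σ : Equiv.Perm ℕ} (hσ : σ ∈ colGroupSet n T) :
    w * σ * w⁻¹ ∈ colGroupSet n T := by
  obtain ⟨a, ha, η, hη, hweq⟩ := hw
  have hwrow := etaFun_mem_row hμ hT ha hη w hweq
  constructor
  · exact suppIn_mul (suppIn_mul hwrow.1 hσ.1) (suppIn_inv hwrow.1)
  · intro i hi
    rw [Finset.mem_Icc] at hi
    set j := w⁻¹ i with hj
    have hjmem : 1 ≤ j ∧ j ≤ n := suppIn_maps (suppIn_inv hwrow.1) hi.1 hi.2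
    have hij : i = w j := by rw [hj, ← Equiv.Perm.mul_apply, mul_inv_cancel, Equiv.Perm.one_apply]
    have hσj : 1 ≤ σ j ∧ σ j ≤ n := suppIn_maps hσ.1 hjmem.1 hjmem.2
    have hσcol : colIdx T (σ j) = colIdx T j := hσ.2 j (Finset.mem_Icc.mpr hjmem)
    show colIdx T (w (σ (w⁻¹ i))) = colIdx T i
    rw [← hj, hij, hweq]
    by_cases hwin : qaT n T a ≤ colIdx T j ∧ colIdx T j < qaT n T a + taT n T a
    · obtain ⟨_, _, _, hc1, _, _, _, _⟩ :=
        etaFun_spec hμ hT ha hη hjmem.1 hjmem.2 hwin.1 hwin.2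
      obtain ⟨_, _, _, hc2, _, _, _, _⟩ := etaFun_spec hμ hT ha hη hσj.1 hσj.2
        (hσcol ▸ hwin.1) (hσcol ▸ hwin.2)
      rw [hc1, hc2, hσcol]
    · rw [etaFun_of_neg (by tauto : ¬(1 ≤ j ∧ j ≤ n ∧ qaT n T a ≤ colIdx T j ∧
        colIdx T j < qaT n T a + taT n T a)),
        etaFun_of_neg (show ¬(1 ≤ σ j ∧ σ j ≤ n ∧ qaT n T a ≤ colIdx T (σ j) ∧
          colIdx T (σ j) < qaT n T a + taT n T a) by rw [hσcol]; tauto), hσcol]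

lemma eta_le_normalizer (hμ : μ.cells.card = n) (hT : IsFilling μ T) :
    etaSubgroup n T ≤ Subgroup.normalizer (colSG n T : Set (Equiv.Perm ℕ)) := by
  rw [etaSubgroup]
  apply Subgroup.closure_le _ |>.mpr
  intro w hw
  rw [SetLike.mem_coe, Subgroup.mem_normalizer_iff]
  intro σ
  constructor
  · exact fun hσ => eta_conj_col hμ hT hw hσ
  · intro hσ
    have h2 := eta_conj_col hμ hT (eta_inv_mem_etaSet hμ hT hw) hσ
    have : w⁻¹ * (w * σ * w⁻¹) * w⁻¹⁻¹ = σ := by group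
    rwa [this] at h2

lemma eta_normalizes (hμ : μ.cells.card = n) (hT : IsFilling μ T) {w : Equiv.Perm ℕ}
    (hw : w ∈ etaSubgroup n T) {σ : Equiv.Perm ℕ} (hσ : σ ∈ colSubgroup n T) :
    w * σ * w⁻¹ ∈ colSubgroup n T := by
  rw [mem_colSubgroup_iff] at hσ ⊢
  exact (Subgroup.mem_normalizer_iff.mp (eta_le_normalizer hμ hT hw) σ).mp hσ

lemma eta_inf_col (hμ : μ.cells.card = n) (hT : IsFilling μ T) :
    etaSubgroup n T ⊓ colSubgroup n T = ⊥ := by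
  rw [Subgroup.eq_bot_iff_forall]
  intro w hw
  rw [Subgroup.mem_inf] at hw
  exact row_col_eq_one hμ hT (eta_le_rowSG hμ hT hw.1) (mem_colSubgroup_iff.mp hw.2)

/-- The set of products `w * σ` as a subgroup. -/
def prodSG (hμ : μ.cells.card = n) (hT : IsFilling μ T) : Subgroup (Equiv.Perm ℕ) where
  carrier := {g | ∃ w σ : Equiv.Perm ℕ, w ∈ etaSubgroup n T ∧ σ ∈ colSubgroup n T ∧
    g = w * σ}
  one_mem' := ⟨1, 1, one_mem _, one_mem _, (one_mul 1).symm⟩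
  mul_mem' := by
    rintro g₁ g₂ ⟨w₁, σ₁, hw₁, hσ₁, rfl⟩ ⟨w₂, σ₂, hw₂, hσ₂, rfl⟩
    refine ⟨w₁ * w₂, (w₂⁻¹ * σ₁ * w₂⁻¹⁻¹) * σ₂, mul_mem hw₁ hw₂,
      mul_mem (eta_normalizes hμ hT (inv_mem hw₂) hσ₁) hσ₂, by group⟩
  inv_mem' := by
    rintro g ⟨w, σ, hw, hσ, rfl⟩
    exact ⟨w⁻¹, w * σ⁻¹ * w⁻¹, inv_mem hw,
      eta_normalizes hμ hT hw (inv_mem hσ), by group⟩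

lemma extCol_eq_sup (n : ℕ) (T : Tab) :
    extColSubgroup n T = colSubgroup n T ⊔ etaSubgroup n T := by
  rw [extColSubgroup, Subgroup.closure_union]
  rfl

lemma col_le_extCol (n : ℕ) (T : Tab) : colSubgroup n T ≤ extColSubgroup n T := by
  rw [extCol_eq_sup]
  exact le_sup_left

lemma eta_le_extCol (n : ℕ) (T : Tab) : etaSubgroup n T ≤ extColSubgroup n T := by
  rw [extCol_eq_sup]
  exact le_sup_right

lemma extCol_le_prod (hμ : μ.cells.card = n) (hT : IsFilling μ T) :
    extColSubgroup n T ≤ prodSG hμ hT := by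
  rw [extColSubgroup]
  apply Subgroup.closure_le _ |>.mpr
  rintro g (hg | hg)
  · exact ⟨1, g, one_mem _, mem_colSubgroup_iff.mpr hg, (one_mul g).symm⟩
  · exact ⟨g, 1, Subgroup.subset_closure hg, one_mem _, (mul_one g).symm⟩

lemma unique_decomp (hμ : μ.cells.card = n) (hT : IsFilling μ T) :
    ∀ g ∈ extColSubgroup n T, ∃! p : Equiv.Perm ℕ × Equiv.Perm ℕ,
      p.1 ∈ etaSubgroup n T ∧ p.2 ∈ colSubgroup n T ∧ g = p.1 * p.2 := by
  intro g hg
  obtain ⟨w, σ, hw, hσ, rfl⟩ := extCol_le_prod hμ hT hg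
  refine ⟨(w, σ), ⟨hw, hσ, rfl⟩, ?_⟩
  rintro ⟨w', σ'⟩ ⟨hw', hσ', heq⟩
  simp only at heq ⊢
  have hkey : w⁻¹ * w' ∈ etaSubgroup n T ⊓ colSubgroup n T := by
    rw [Subgroup.mem_inf]
    constructor
    · exact mul_mem (inv_mem hw) hw'
    · have h6 : w * σ = w' * σ' := heq
      have h5 : w⁻¹ * w' = σ * σ'⁻¹ := by
        calc w⁻¹ * w' = w⁻¹ * (w' * σ') * σ'⁻¹ := by group
        _ = w⁻¹ * (w * σ) * σ'⁻¹ := by rw [h6]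
        _ = σ * σ'⁻¹ := by group
      rw [h5]
      exact mul_mem hσ (inv_mem hσ')
  rw [eta_inf_col hμ hT, Subgroup.mem_bot] at hkey
  obtain rfl : w = w' := inv_mul_eq_one.mp hkey
  exact Prod.ext rfl (mul_left_cancel heq).symm


lemma embedPerm_eq_hom (n : ℕ) (τ : Equiv.Perm (Fin n)) :
    embedPerm n τ = Equiv.Perm.extendDomainHom (finShift n) τ := rfl

lemma embedPerm_injective (n : ℕ) : Function.Injective (embedPerm n) :=
  Equiv.Perm.extendDomainHom_injective (finShift n)

lemma embedPerm_mul (n : ℕ) (τ₁ τ₂ : Equiv.Perm (Fin n)) :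
    embedPerm n (τ₁ * τ₂) = embedPerm n τ₁ * embedPerm n τ₂ := by
  simp only [embedPerm_eq_hom, map_mul]

lemma embedPerm_inv (n : ℕ) (τ : Equiv.Perm (Fin n)) :
    embedPerm n τ⁻¹ = (embedPerm n τ)⁻¹ := by
  simp only [embedPerm_eq_hom, map_inv]

lemma suppIn_exists_embed {w : Equiv.Perm ℕ} (h : SuppIn n w) :
    ∃ τ : Equiv.Perm (Fin n), embedPerm n τ = w := by
  have hp : ∀ i, (1 ≤ i ∧ i ≤ n) ↔ (1 ≤ w i ∧ w i ≤ n) := by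
    intro i
    constructor
    · exact fun hi => suppIn_maps h hi.1 hi.2
    · intro hi
      by_contra hc
      have := h i (by omega)
      omega
  set ν : Equiv.Perm {i : ℕ // 1 ≤ i ∧ i ≤ n} := w.subtypePerm (fun i => (hp i).symm) with hν
  refine ⟨((finShift n).permCongr).symm ν, ?_⟩
  apply Equiv.ext
  intro i
  by_cases hi : 1 ≤ i ∧ i ≤ n
  · have hext := Equiv.Perm.extendDomain_apply_subtype
      ((finShift n).permCongr.symm ν) (finShift n) (b := i) hi
    rw [embedPerm, hext]
    simp [Equiv.permCongr_symm, Equiv.permCongr_apply, hν, Equiv.Perm.subtypePerm_apply]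
  · have hext := Equiv.Perm.extendDomain_apply_not_subtype
      ((finShift n).permCongr.symm ν) (finShift n) (b := i) hi
    rw [embedPerm, hext, h i (by omega)]

lemma signOn_embed (n : ℕ) (τ : Equiv.Perm (Fin n)) :
    signOn n (embedPerm n τ) = (Equiv.Perm.sign τ : ℤ) := by
  rw [signOn]
  have h : ∃ τ' : Equiv.Perm (Fin n), embedPerm n τ' = embedPerm n τ := ⟨τ, rfl⟩
  rw [dif_pos h]
  congr 2
  exact embedPerm_injective n h.choose_spec

lemma suppIn_of_col {σ : Equiv.Perm ℕ} (hσ : σ ∈ colSubgroup n T) : SuppIn n σ :=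
  (mem_colSubgroup_iff.mp hσ).1

lemma suppIn_of_eta (hμ : μ.cells.card = n) (hT : IsFilling μ T) {w : Equiv.Perm ℕ}
    (hw : w ∈ etaSubgroup n T) : SuppIn n w := (eta_le_rowSG hμ hT hw).1

/-- The sign character on the extended column group. -/
noncomputable def fSgn (n : ℕ) (T : Tab) : Equiv.Perm ℕ → ℤ := fun g =>
  if h : ∃ p : Equiv.Perm ℕ × Equiv.Perm ℕ, p.1 ∈ etaSubgroup n T ∧
      p.2 ∈ colSubgroup n T ∧ g = p.1 * p.2 then
    signOn n h.choose.2
  else 1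

lemma fSgn_eval (hμ : μ.cells.card = n) (hT : IsFilling μ T) {w σ : Equiv.Perm ℕ}
    (hw : w ∈ etaSubgroup n T) (hσ : σ ∈ colSubgroup n T) :
    fSgn n T (w * σ) = signOn n σ := by
  rw [fSgn]
  have h : ∃ p : Equiv.Perm ℕ × Equiv.Perm ℕ, p.1 ∈ etaSubgroup n T ∧
      p.2 ∈ colSubgroup n T ∧ w * σ = p.1 * p.2 := ⟨(w, σ), hw, hσ, rfl⟩
  rw [dif_pos h]
  have hmem : w * σ ∈ extColSubgroup n T :=
    mul_mem (eta_le_extCol n T hw) (col_le_extCol n T hσ)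
  obtain ⟨p, hp, huniq⟩ := unique_decomp hμ hT (w * σ) hmem
  have h1 := huniq h.choose ⟨h.choose_spec.1, h.choose_spec.2.1, h.choose_spec.2.2⟩
  have h2 := huniq (w, σ) ⟨hw, hσ, rfl⟩
  rw [h1, ← h2]

lemma signOn_mul_suppIn {w₁ w₂ : Equiv.Perm ℕ} (h₁ : SuppIn n w₁) (h₂ : SuppIn n w₂) :
    signOn n (w₁ * w₂) = signOn n w₁ * signOn n w₂ := by
  obtain ⟨τ₁, rfl⟩ := suppIn_exists_embed h₁
  obtain ⟨τ₂, rfl⟩ := suppIn_exists_embed h₂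
  rw [← embedPerm_mul, signOn_embed, signOn_embed, signOn_embed, map_mul]
  push_cast
  ring

lemma signOn_conj (hμ : μ.cells.card = n) (hT : IsFilling μ T) {w σ : Equiv.Perm ℕ}
    (hw : SuppIn n w) (hσ : SuppIn n σ) :
    signOn n (w * σ * w⁻¹) = signOn n σ := by
  obtain ⟨ρ, rfl⟩ := suppIn_exists_embed hw
  obtain ⟨τ, rfl⟩ := suppIn_exists_embed hσ
  rw [← embedPerm_inv, ← embedPerm_mul, ← embedPerm_mul, signOn_embed, signOn_embed]
  have hs : Equiv.Perm.sign (ρ * τ * ρ⁻¹) = Equiv.Perm.sign τ := by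
    rw [map_mul, map_mul, map_inv,
      mul_comm (Equiv.Perm.sign ρ) (Equiv.Perm.sign τ), mul_inv_cancel_right]
  rw [hs]

lemma signOn_units {σ : Equiv.Perm ℕ} (hσ : SuppIn n σ) :
    signOn n σ = 1 ∨ signOn n σ = -1 := by
  obtain ⟨τ, rfl⟩ := suppIn_exists_embed hσ
  rw [signOn_embed]
  rcases Int.units_eq_one_or (Equiv.Perm.sign τ) with h | h <;> rw [h] <;> simp


lemma fSgn_pm (hμ : μ.cells.card = n) (hT : IsFilling μ T) :
    ∀ g ∈ extColSubgroup n T, fSgn n T g = 1 ∨ fSgn n T g = -1 := by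
  intro g hg
  obtain ⟨w, σ, hw, hσ, rfl⟩ := extCol_le_prod hμ hT hg
  rw [fSgn_eval hμ hT hw hσ]
  exact signOn_units (suppIn_of_col hσ)

lemma fSgn_mul (hμ : μ.cells.card = n) (hT : IsFilling μ T) :
    ∀ g₁ ∈ extColSubgroup n T, ∀ g₂ ∈ extColSubgroup n T,
      fSgn n T (g₁ * g₂) = fSgn n T g₁ * fSgn n T g₂ := by
  intro g₁ hg₁ g₂ hg₂
  obtain ⟨w₁, σ₁, hw₁, hσ₁, rfl⟩ := extCol_le_prod hμ hT hg₁
  obtain ⟨w₂, σ₂, hw₂, hσ₂, rfl⟩ := extCol_le_prod hμ hT hg₂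
  have hconj : w₂⁻¹ * σ₁ * w₂⁻¹⁻¹ ∈ colSubgroup n T :=
    eta_normalizes hμ hT (inv_mem hw₂) hσ₁
  have hg : (w₁ * σ₁) * (w₂ * σ₂) = (w₁ * w₂) * ((w₂⁻¹ * σ₁ * w₂⁻¹⁻¹) * σ₂) := by group
  rw [hg, fSgn_eval hμ hT (mul_mem hw₁ hw₂) (mul_mem hconj hσ₂),
    fSgn_eval hμ hT hw₁ hσ₁, fSgn_eval hμ hT hw₂ hσ₂,
    signOn_mul_suppIn (suppIn_of_col hconj) (suppIn_of_col hσ₂)]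
  congr 1
  exact signOn_conj hμ hT (suppIn_inv (suppIn_of_eta hμ hT hw₂)) (suppIn_of_col hσ₁)

end

theorem statement_15 (n : ℕ) (μ : YoungDiagram) (hμ : μ.cells.card = n) (T : Tab)
    (hT : IsFilling μ T) :
    -- (i)
    ((∀ a, 1 ≤ a → ∀ η : Equiv.Perm ℕ, (∀ i, taT n T a ≤ i → η i = i) →
        (∃ w : Equiv.Perm ℕ, ⇑w = etaFun n T a η) ∧
        (∀ w : Equiv.Perm ℕ, ⇑w = etaFun n T a η → w ∈ rowGroupSet n T)) ∧
      (∀ a, 1 ≤ a → ∀ η₁ η₂ : Equiv.Perm ℕ, (∀ i, taT n T a ≤ i → η₁ i = i) →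
        (∀ i, taT n T a ≤ i → η₂ i = i) →
        etaFun n T a (η₁ * η₂) = etaFun n T a η₁ ∘ etaFun n T a η₂) ∧
      (∀ a a', 1 ≤ a → 1 ≤ a' → a ≠ a' → ∀ η η' : Equiv.Perm ℕ,
        (∀ i, taT n T a ≤ i → η i = i) → (∀ i, taT n T a' ≤ i → η' i = i) →
        etaFun n T a η ∘ etaFun n T a' η' = etaFun n T a' η' ∘ etaFun n T a η) ∧
      (∀ a, 1 ≤ a → ∀ η₁ η₂ : Equiv.Perm ℕ, (∀ i, taT n T a ≤ i → η₁ i = i) →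
        (∀ i, taT n T a ≤ i → η₂ i = i) →
        etaFun n T a η₁ = etaFun n T a η₂ → η₁ = η₂)) ∧
    -- (ii)
    ((∀ w ∈ etaSubgroup n T, ∀ σ ∈ colSubgroup n T, w * σ * w⁻¹ ∈ colSubgroup n T) ∧
      etaSubgroup n T ⊓ colSubgroup n T = ⊥ ∧
      extColSubgroup n T = colSubgroup n T ⊔ etaSubgroup n T ∧
      (∀ g ∈ extColSubgroup n T, ∃! p : Equiv.Perm ℕ × Equiv.Perm ℕ,
        p.1 ∈ etaSubgroup n T ∧ p.2 ∈ colSubgroup n T ∧ g = p.1 * p.2)) ∧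
    -- (iii)
    (∃ f : Equiv.Perm ℕ → ℤ,
      (∀ w ∈ etaSubgroup n T, ∀ σ ∈ colSubgroup n T, f (w * σ) = signOn n σ) ∧
      (∀ g ∈ extColSubgroup n T, f g = 1 ∨ f g = -1) ∧
      (∀ g₁ ∈ extColSubgroup n T, ∀ g₂ ∈ extColSubgroup n T,
        f (g₁ * g₂) = f g₁ * f g₂)) := by
  refine ⟨⟨?_, ?_, ?_, ?_⟩,
    ⟨?_, eta_inf_col hμ hT, extCol_eq_sup n T, unique_decomp hμ hT⟩, ?_⟩
  · intro a ha η hη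
    exact ⟨exists_etaPerm hμ hT ha hη, fun w hw => etaFun_mem_row hμ hT ha hη w hw⟩
  · intro a ha η₁ η₂ h1 h2
    exact etaFun_comp hμ hT ha h1 h2
  · intro a a' ha ha' hne η η' hη hη'
    exact etaFun_commute hμ hT ha ha' hne hη hη'
  · intro a ha η₁ η₂ h1 h2 hEq
    exact etaFun_injective hμ hT ha h1 h2 hEq
  · intro w hw σ hσ
    exact eta_normalizes hμ hT hw hσ
  · exact ⟨fSgn n T, fun w hw σ hσ => fSgn_eval hμ hT hw hσ, fSgn_pm hμ hT,
      fSgn_mul hμ hT⟩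

end HigherSpecht
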